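/- There is no absolute constant c > 0 such that every 2n-vertex digraph with minimum out-degree at least s contains an n-vertex induced subdigraph with minimum out-degree at least s/2 − c. More precisely, for every constant c there exist n and a 2n-vertex digraph D with minimum out-degree s = n−1 such that every n-vertex induced subdigraph of D has minimum out-degree strictly less than s/2 − c. -/

import Mathlib

open Finset

/-- Out-degree of `v` within the induced subdigraph on `X`. -/
def outDegIn {V : Type*} [DecidableEq V] (A : V → V → Prop) [DecidableRel A]
    (X : Finset V) (v : V) : ℕ :=
  (X.filter (fun w => A v w)).card

/-- Minimum out-degree of the induced subdigraph on `X` (0 for the empty digraph). -/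
def minOutDeg {V : Type*} [DecidableEq V] (A : V → V → Prop) [DecidableRel A]
    (X : Finset V) : ℕ :=
  if h : X.Nonempty then X.inf' h (outDegIn A X) else 0


/-- Balanced-ternary weight. -/
def wt : ℕ → ℕ
  | 0 => 0
  | (n+1) =>
    if (n+1) % 3 = 0 then wt ((n+1)/3)
    else if (n+1) % 3 = 1 then wt ((n+1)/3) + 1
    else wt ((n+1)/3 + 1) + 1
  decreasing_by
    · exact Nat.div_lt_self (Nat.succ_pos n) (by norm_num)
    · exact Nat.div_lt_self (Nat.succ_pos n) (by norm_num)
    · rename_i h1 h2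
      have : (n+1) % 3 = 2 := by omega
      have h3 : (n+1)/3 + 1 < n + 1 := by
        rcases Nat.lt_or_ge n 2 with h | h
        · interval_cases n <;> simp_all
        · have := Nat.div_le_self (n+1) 3
          have : (n+1)/3 ≤ (n+1)/3 := le_refl _
          have hd : (n+1) / 3 < n := by
            have h31 : 3 * n ≥ n + 3 := by omega
            calc (n+1)/3 ≤ (n+1) / 3 := le_refl _
            _ < n := by
              apply Nat.div_lt_of_lt_mul
              omega
          omega
      exact h3

lemma wt_three_mul (k : ℕ) : wt (3 * k) = wt k := by
  cases k with
  | zero => simp [wt]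
  | succ m =>
    have h : 3 * (m+1) = (3*m+2) + 1 := by ring
    rw [h, wt]
    have h0 : (3*m+2+1) % 3 = 0 := by omega
    have h3 : (3*m+2+1) / 3 = m + 1 := by omega
    simp [h0, h3]

lemma wt_three_mul_add_one (k : ℕ) : wt (3 * k + 1) = wt k + 1 := by
  have h : 3 * k + 1 = (3*k) + 1 := by ring
  rw [h, wt]
  have h0 : (3*k+1) % 3 = 1 := by omega
  have h1 : ¬ ((3*k+1) % 3 = 0) := by omega
  have h3 : (3*k+1) / 3 = k := by omega
  simp [h0, h1, h3]

lemma wt_three_mul_add_two (k : ℕ) : wt (3 * k + 2) = wt (k + 1) + 1 := by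
  have h : 3 * k + 2 = (3*k+1) + 1 := by ring
  rw [h, wt]
  have h0 : ¬ ((3*k+1+1) % 3 = 0) := by omega
  have h1 : ¬ ((3*k+1+1) % 3 = 1) := by omega
  have h3 : (3*k+1+1) / 3 + 1 = k + 1 := by omega
  simp [h0, h1, h3]

/-- `wt` is 1-Lipschitz. -/
lemma wt_lipschitz : ∀ k : ℕ, wt (k+1) ≤ wt k + 1 ∧ wt k ≤ wt (k+1) + 1 := by
  intro k
  induction k using Nat.strong_induction_on with
  | _ k ih =>
    have hm3 : k % 3 = 0 ∨ k % 3 = 1 ∨ k % 3 = 2 := by omega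
    rcases hm3 with h | h | h
    · -- k = 3m
      obtain ⟨m, hm⟩ : ∃ m, k = 3 * m := ⟨k/3, by omega⟩
      subst hm
      rw [wt_three_mul, wt_three_mul_add_one]
      omega
    · obtain ⟨m, hm⟩ : ∃ m, k = 3 * m + 1 := ⟨k/3, by omega⟩
      subst hm
      rw [wt_three_mul_add_one, wt_three_mul_add_two]
      have := ih m (by omega)
      omega
    · obtain ⟨m, hm⟩ : ∃ m, k = 3 * m + 2 := ⟨k/3, by omega⟩
      subst hm
      have h1 : 3*m+2+1 = 3*(m+1) := by ring
      rw [wt_three_mul_add_two, h1, wt_three_mul]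
      omega

lemma wt_add_le (y k : ℕ) : wt (y + k) ≤ wt y + k ∧ wt y ≤ wt (y + k) + k := by
  induction k with
  | zero => simp
  | succ m ih =>
    have h := wt_lipschitz (y + m)
    constructor
    · calc wt (y + (m+1)) = wt ((y+m)+1) := by ring_nf
      _ ≤ wt (y+m) + 1 := h.1
      _ ≤ wt y + m + 1 := by omega
    · have : wt y ≤ wt (y+m) + m := ih.2
      have h2 : wt (y+m) ≤ wt ((y+m)+1) + 1 := h.2
      have h3 : (y+m)+1 = y + (m+1) := by ring
      rw [h3] at h2
      omega

/-- `wt (3y + d) ≤ wt y + (d/3 + d%3)`. -/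
lemma wt_up (y d : ℕ) : wt (3*y + d) ≤ wt y + (d/3 + d%3) := by
  obtain ⟨k, r, hr, hd⟩ : ∃ k r, r < 3 ∧ d = 3*k + r := ⟨d/3, d%3, Nat.mod_lt _ (by norm_num), by omega⟩
  subst hd
  have hdiv : (3*k + r)/3 = k := by omega
  have hmod : (3*k + r)%3 = r := by omega
  rw [hdiv, hmod]
  have hbase : wt (3*(y+k) + r) ≤ wt (y+k) + r := by
    interval_cases r
    · simpa using (wt_three_mul (y+k)).le
    · simpa using (wt_three_mul_add_one (y+k)).le
    · rw [wt_three_mul_add_two]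
      have := (wt_lipschitz (y+k)).1
      omega
  have h1 : 3*y + (3*k + r) = 3*(y+k) + r := by ring
  rw [h1]
  have h2 := (wt_add_le y k).1
  omega

/-- `wt (3y − d) ≤ wt y + (d/3 + d%3)` for `d ≤ 3y`, stated additively:
if `e + d = 3y` then `wt e ≤ wt y + (d/3 + d%3)`. -/
lemma wt_down (y d e : ℕ) (h : e + d = 3*y) : wt e ≤ wt y + (d/3 + d%3) := by
  obtain ⟨k, r, hr, hd⟩ : ∃ k r, r < 3 ∧ d = 3*k + r := ⟨d/3, d%3, Nat.mod_lt _ (by norm_num), by omega⟩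
  subst hd
  have hdiv : (3*k + r)/3 = k := by omega
  have hmod : (3*k + r)%3 = r := by omega
  rw [hdiv, hmod]
  -- e = 3(y-k) - r ; set z := y - k, need k ≤ y unless e small
  rcases le_or_gt (3*k + r) (3*y) with hle | hlt
  swap
  · omega
  have hky : k ≤ y := by omega
  obtain ⟨z, hz⟩ : ∃ z, y = z + k := ⟨y - k, by omega⟩
  subst hz
  have he : e + r = 3*z := by omega
  have hbase : wt e ≤ wt z + r := by
    interval_cases r
    · have he3 : e = 3*z := by omega
      simp [he3, wt_three_mul]
    · -- e = 3z - 1 = 3(z-1)+2  (z ≥ 1 since e+1=3z, e≥0 ⇒ z ≥ 1 unless e+1=0)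
      have hz1 : 1 ≤ z := by omega
      obtain ⟨z', hz'⟩ : ∃ z', z = z' + 1 := ⟨z - 1, by omega⟩
      subst hz'
      have : e = 3*z' + 2 := by omega
      rw [this, wt_three_mul_add_two]
    · have hz1 : 1 ≤ z := by omega
      obtain ⟨z', hz'⟩ : ∃ z', z = z' + 1 := ⟨z - 1, by omega⟩
      subst hz'
      have : e = 3*z' + 1 := by omega
      rw [this, wt_three_mul_add_one]
      have := (wt_lipschitz z').2
      omega
  have h2 := (wt_add_le z k).2
  omega

lemma wt_zero : wt 0 = 0 := by simp [wt]

lemma wt_one : wt 1 = 1 := by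
  have := wt_three_mul_add_one 0
  simpa [wt_zero] using this

/-- `wt ((3^j - 1)/2) = j`, stated additively via `h j` with `2 * h j + 1 = 3^j`. -/
def hlf : ℕ → ℕ
  | 0 => 0
  | (j+1) => 3 * hlf j + 1

lemma hlf_spec (j : ℕ) : 2 * hlf j + 1 = 3^j := by
  induction j with
  | zero => simp [hlf]
  | succ m ih => rw [hlf]; rw [pow_succ]; omega

lemma wt_hlf (j : ℕ) : wt (hlf j) = j := by
  induction j with
  | zero => simp [hlf, wt]
  | succ m ih => rw [hlf, wt_three_mul_add_one, ih]

lemma wt_hlf_succ (j : ℕ) : wt (hlf j + 1) = j + 1 := by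
  induction j with
  | zero => simp [hlf, wt_one]
  | succ m ih =>
    have : hlf (m+1) + 1 = 3 * hlf m + 2 := by rw [hlf]
    rw [this, wt_three_mul_add_two, ih]

lemma div3_mod3_le (d : ℕ) : d/3 + d%3 ≤ d := by omega

lemma dagger_aux (a b c : ℕ) (hc1 : 1 ≤ c) (hca : c ≤ a) (hcb : c ≤ b) :
    (1 ≤ b ∧ wt (a+b+c) + c ≤ wt b + a) ∨ (1 ≤ c ∧ wt (a+b+c) + a ≤ wt c + b) := by
  obtain ⟨α, hα⟩ : ∃ α, a = c + α := ⟨a - c, by omega⟩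
  obtain ⟨β, hβ⟩ : ∃ β, b = c + β := ⟨b - c, by omega⟩
  rcases le_or_gt β (2*α) with hle | hgt
  · left
    refine ⟨by omega, ?_⟩
    suffices h : wt (a+b+c) ≤ wt b + α by omega
    rcases le_or_gt (3*b) (a+b+c) with h1 | h1
    · obtain ⟨d, hd⟩ : ∃ d, a+b+c = 3*b + d := ⟨a+b+c - 3*b, by omega⟩
      rw [hd]
      have h2 := wt_up b d
      have h3 : d ≤ α := by omega
      have h4 := div3_mod3_le d
      omega
    · obtain ⟨d, hd⟩ : ∃ d, (a+b+c) + d = 3*b := ⟨3*b - (a+b+c), by omega⟩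
      have h2 := wt_down b d (a+b+c) hd
      have h3 : d/3 + d%3 ≤ α := by omega
      omega
  · right
    refine ⟨hc1, ?_⟩
    suffices h : wt (a+b+c) + α ≤ wt c + β by omega
    have hd : a+b+c = 3*c + (α+β) := by omega
    rw [hd]
    have h2 := wt_up c (α+β)
    have h3 : (α+β)/3 + (α+β)%3 + α ≤ β := by omega
    omega

lemma dagger (a b c : ℕ) (h : 1 ≤ a + b + c) :
    (1 ≤ a ∧ wt (a+b+c) + b ≤ wt a + c) ∨
    (1 ≤ b ∧ wt (a+b+c) + c ≤ wt b + a) ∨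
    (1 ≤ c ∧ wt (a+b+c) + a ≤ wt c + b) := by
  rcases le_total c a with hca | hac
  · rcases le_total c b with hcb | hbc
    · -- c is a min
      rcases Nat.eq_zero_or_pos c with hc0 | hc1
      · subst hc0
        rcases Nat.eq_zero_or_pos b with hb0 | hb1
        · subst hb0
          left
          exact ⟨by omega, by simp⟩
        · right; left
          refine ⟨hb1, ?_⟩
          have h2 : wt (b + a) ≤ wt b + a := (wt_add_le b a).1
          have h3 : a + b + 0 = b + a := by omega
          rw [h3]
          omega
      · rcases dagger_aux a b c hc1 hca hcb with ⟨h1, h2⟩ | ⟨h1, h2⟩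
        · right; left; exact ⟨h1, h2⟩
        · right; right; exact ⟨h1, h2⟩
    · -- b ≤ c ≤ a : b is a min ; rotate to (c, a, b)
      rcases Nat.eq_zero_or_pos b with hb0 | hb1
      · subst hb0
        rcases Nat.eq_zero_or_pos a with ha0 | ha1
        · subst ha0
          right; right
          exact ⟨by omega, by simp⟩
        · left
          refine ⟨ha1, ?_⟩
          have h2 : wt (a + c) ≤ wt a + c := (wt_add_le a c).1
          have h3 : a + 0 + c = a + c := by omega
          rw [h3]
          omega
      · have := dagger_aux c a b hb1 (by omega) (by omega)
        have hco : c + a + b = a + b + c := by omega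
        rw [hco] at this
        rcases this with ⟨h1, h2⟩ | ⟨h1, h2⟩
        · left; exact ⟨h1, h2⟩
        · right; left; exact ⟨h1, h2⟩
  · rcases le_total a b with hab | hba
    · -- a is a min ; rotate to (b, c, a)
      rcases Nat.eq_zero_or_pos a with ha0 | ha1
      · subst ha0
        rcases Nat.eq_zero_or_pos c with hc0 | hc1
        · subst hc0
          right; left
          exact ⟨by omega, by simp⟩
        · right; right
          refine ⟨hc1, ?_⟩
          have h2 : wt (c + b) ≤ wt c + b := (wt_add_le c b).1
          have h3 : 0 + b + c = c + b := by omega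
          rw [h3]
          omega
      · have := dagger_aux b c a ha1 hab hac
        have hco : b + c + a = a + b + c := by omega
        rw [hco] at this
        rcases this with ⟨h1, h2⟩ | ⟨h1, h2⟩
        · right; right; exact ⟨h1, h2⟩
        · left; exact ⟨h1, h2⟩
    · -- b ≤ a ≤ c... here a ≤ c and b ≤ a so b is a min; rotate to (c, a, b)
      rcases Nat.eq_zero_or_pos b with hb0 | hb1
      · subst hb0
        rcases Nat.eq_zero_or_pos a with ha0 | ha1
        · subst ha0
          right; right
          exact ⟨by omega, by simp⟩
        · left
          refine ⟨ha1, ?_⟩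
          have h2 : wt (a + c) ≤ wt a + c := (wt_add_le a c).1
          have h3 : a + 0 + c = a + c := by omega
          rw [h3]
          omega
      · have := dagger_aux c a b hb1 (by omega) (by omega)
        have hco : c + a + b = a + b + c := by omega
        rw [hco] at this
        rcases this with ⟨h1, h2⟩ | ⟨h1, h2⟩
        · left; exact ⟨h1, h2⟩
        · right; left; exact ⟨h1, h2⟩

/-- The 3-adic lexicographic tower vertex type. -/
def Tw : ℕ → Type
  | 0 => Unit
  | (j+1) => Fin 3 × Tw j

def twDecEq : (j : ℕ) → DecidableEq (Tw j)
  | 0 => inferInstanceAs (DecidableEq Unit)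
  | (j+1) => letI := twDecEq j; inferInstanceAs (DecidableEq (Fin 3 × Tw j))

instance instTwDecEq (j : ℕ) : DecidableEq (Tw j) := twDecEq j

def twFintype : (j : ℕ) → Fintype (Tw j)
  | 0 => inferInstanceAs (Fintype Unit)
  | (j+1) => letI := twFintype j; inferInstanceAs (Fintype (Fin 3 × Tw j))

instance instTwFintype (j : ℕ) : Fintype (Tw j) := twFintype j

def twDefault : (j : ℕ) → Tw j
  | 0 => ()
  | (j+1) => ((0 : Fin 3), twDefault j)

/-- The tower tournament: arcs by most significant differing trit. -/
def arcT : (j : ℕ) → Tw j → Tw j → Bool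
  | 0, _, _ => false
  | (j+1), u, v => if u.1 = v.1 then arcT j u.2 v.2 else decide (v.1 = u.1 + 1)

lemma arcT_irrefl : ∀ (j : ℕ) (x : Tw j), arcT j x x = false
  | 0, _ => rfl
  | (j+1), x => by
      show arcT (j+1) x x = false
      rw [arcT]
      simp [arcT_irrefl j x.2]

lemma card_Tw : ∀ j : ℕ, Fintype.card (Tw j) = 3^j
  | 0 => rfl
  | (j+1) => by
      have : Fintype.card (Tw (j+1)) = Fintype.card (Fin 3 × Tw j) := rfl
      rw [this, Fintype.card_prod, card_Tw j, Fintype.card_fin, pow_succ]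
      ring

section Fibers

variable {j : ℕ}

/-- Fiber of a finset of the `(j+1)`-tower over first coordinate `p`. -/
def fib (X : Finset (Tw (j+1))) (p : Fin 3) : Finset (Tw j) :=
  (X.filter (fun (z : Tw (j+1)) => (z : Fin 3 × Tw j).1 = p)).image Prod.snd

lemma mem_fib {X : Finset (Tw (j+1))} {p : Fin 3} {y : Tw j} :
    y ∈ fib X p ↔ ((p, y) : Fin 3 × Tw j) ∈ X := by
  unfold fib
  constructor
  · intro h
    obtain ⟨z, hz, hz2⟩ := Finset.mem_image.mp h
    obtain ⟨hz, hz1⟩ := Finset.mem_filter.mp hz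
    have : z = ((p, y) : Fin 3 × Tw j) := by
      cases z
      simp_all
    rwa [this] at hz
  · intro h
    exact Finset.mem_image.mpr ⟨(p, y), Finset.mem_filter.mpr ⟨h, rfl⟩, rfl⟩

lemma card_fib (X : Finset (Tw (j+1))) (p : Fin 3) :
    (fib X p).card = (X.filter (fun (z : Tw (j+1)) => (z : Fin 3 × Tw j).1 = p)).card := by
  unfold fib
  apply Finset.card_image_of_injOn
  intro z hz z' hz' hzz
  replace hz := (Finset.mem_filter.mp (Finset.mem_coe.mp hz)).2
  replace hz' := (Finset.mem_filter.mp (Finset.mem_coe.mp hz')).2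
  cases z; cases z'
  simp_all

lemma sum_card_fib (X : Finset (Tw (j+1))) :
    (fib X 0).card + (fib X 1).card + (fib X 2).card = X.card := by
  rw [card_fib, card_fib, card_fib]
  have h := Finset.card_eq_sum_card_fiberwise
    (f := fun (z : Tw (j+1)) => (z : Fin 3 × Tw j).1) (s := X) (t := (Finset.univ : Finset (Fin 3)))
    (fun x _ => Finset.mem_univ _)
  rw [h, Fin.sum_univ_three]

lemma card_fib_filter (X : Finset (Tw (j+1))) (p : Fin 3) (Q : Tw j → Bool) :
    ((fib X p).filter (fun y => Q y = true)).card
      = (X.filter (fun (z : Tw (j+1)) => (z : Fin 3 × Tw j).1 = p ∧ Q (z : Fin 3 × Tw j).2 = true)).card := by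
  have himg : (fib X p).filter (fun y => Q y = true)
      = (X.filter (fun (z : Tw (j+1)) => (z : Fin 3 × Tw j).1 = p ∧ Q (z : Fin 3 × Tw j).2 = true)).image Prod.snd := by
    ext y
    rw [Finset.mem_filter, mem_fib]
    constructor
    · rintro ⟨hy, hQ⟩
      exact Finset.mem_image.mpr ⟨(p, y), Finset.mem_filter.mpr ⟨hy, rfl, hQ⟩, rfl⟩
    · intro h
      obtain ⟨z, hz, hzy⟩ := Finset.mem_image.mp h
      obtain ⟨hz, hz1, hz2⟩ := Finset.mem_filter.mp hz
      have : z = ((p, y) : Fin 3 × Tw j) := by cases z; simp_all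
      subst this
      exact ⟨hz, by simpa using hz2⟩
  rw [himg]
  apply Finset.card_image_of_injOn
  intro z hz z' hz' hzz
  replace hz := (Finset.mem_filter.mp (Finset.mem_coe.mp hz)).2
  replace hz' := (Finset.mem_filter.mp (Finset.mem_coe.mp hz')).2
  cases z; cases z'
  simp_all

lemma fin3_ne_succ (p : Fin 3) : p ≠ p + 1 := by fin_cases p <;> decide

lemma deg_decomp (X : Finset (Tw (j+1))) (p : Fin 3) (x : Tw j) :
    outDegIn (fun u v => arcT (j+1) u v = true) X ((p, x) : Fin 3 × Tw j)
      = outDegIn (fun u v => arcT j u v = true) (fib X p) x + (fib X (p+1)).card := by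
  unfold outDegIn
  have hsplit : X.filter (fun w => arcT (j+1) ((p,x) : Fin 3 × Tw j) w = true)
      = (X.filter (fun (w : Tw (j+1)) => (w : Fin 3 × Tw j).1 = p ∧ arcT j x (w : Fin 3 × Tw j).2 = true))
        ∪ (X.filter (fun (w : Tw (j+1)) => (w : Fin 3 × Tw j).1 = p + 1)) := by
    rw [← Finset.filter_or]
    apply Finset.filter_congr
    intro w _
    show (arcT (j+1) (p,x) w = true) ↔ _
    show (if p = (w : Fin 3 × Tw j).1 then arcT j x (w : Fin 3 × Tw j).2
      else decide ((w : Fin 3 × Tw j).1 = p + 1)) = true ↔ _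
    rcases eq_or_ne ((w : Fin 3 × Tw j).1) p with h | h
    · have hne : ¬ ((w : Fin 3 × Tw j).1 = p + 1) := by
        rw [h]; exact fin3_ne_succ p
      simp [h, hne]
    · have h2 : ¬ (p = (w : Fin 3 × Tw j).1) := fun hc => h hc.symm
      simp [h2, h]
  rw [hsplit, Finset.card_union_of_disjoint]
  · congr 1
    · exact (card_fib_filter X p (fun y => arcT j x y)).symm
    · exact (card_fib X (p+1)).symm
  · rw [Finset.disjoint_left]
    intro w hw1 hw2
    rw [Finset.mem_filter] at hw1 hw2
    exact fin3_ne_succ p (hw1.2.1 ▸ hw2.2)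

end Fibers

lemma wt_le_self (k : ℕ) : wt k ≤ k := by
  have := (wt_add_le 0 k).1
  simpa [wt_zero] using this

/-- Main tower estimate: every nonempty subset `Y` has a vertex of induced
out-degree at most `(|Y| - wt |Y|)/2`. -/
theorem tower_low : ∀ (j : ℕ) (Y : Finset (Tw j)), Y.Nonempty →
    ∃ v ∈ Y, 2 * outDegIn (fun u v => arcT j u v = true) Y v + wt Y.card ≤ Y.card := by
  intro j
  induction j with
  | zero =>
    intro Y hY
    obtain ⟨v, hv⟩ := hY
    refine ⟨v, hv, ?_⟩
    have hdeg : outDegIn (fun u v => arcT 0 u v = true) Y v = 0 := by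
      unfold outDegIn
      convert Finset.card_empty
      apply Finset.filter_false_of_mem
      intro w _
      show ¬ (arcT 0 v w = true)
      simp [arcT]
    rw [hdeg]
    have hcard : Y.card = 1 := by
      have h1 : 1 ≤ Y.card := Finset.card_pos.mpr ⟨v, hv⟩
      have h2 : Y.card ≤ Fintype.card (Tw 0) := Finset.card_le_univ Y
      have h3 : Fintype.card (Tw 0) = 1 := rfl
      omega
    rw [hcard, wt_one]
  | succ j ih =>
    intro Y hY
    set a := (fib Y 0).card with ha
    set b := (fib Y 1).card with hb
    set c := (fib Y 2).card with hc
    have hsum : a + b + c = Y.card := sum_card_fib Y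
    have hpos : 1 ≤ a + b + c := by
      rw [hsum]; exact Finset.Nonempty.card_pos hY
    have hwt : wt Y.card = wt (a+b+c) := by rw [hsum]
    rcases dagger a b c hpos with ⟨h1, h2⟩ | ⟨h1, h2⟩ | ⟨h1, h2⟩
    · -- use fiber 0 ; next fiber is 1 (card b)
      obtain ⟨v, hv, hlow⟩ := ih (fib Y 0) (Finset.card_pos.mp (by omega))
      refine ⟨((0 : Fin 3), v), mem_fib.mp hv, ?_⟩
      rw [deg_decomp Y 0 v]
      have hfib1 : ((0 : Fin 3) + 1) = (1 : Fin 3) := by decide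
      rw [hfib1, ← hb]
      rw [← ha] at hlow
      omega
    · obtain ⟨v, hv, hlow⟩ := ih (fib Y 1) (Finset.card_pos.mp (by omega))
      refine ⟨((1 : Fin 3), v), mem_fib.mp hv, ?_⟩
      rw [deg_decomp Y 1 v]
      have hfib1 : ((1 : Fin 3) + 1) = (2 : Fin 3) := by decide
      rw [hfib1, ← hc]
      rw [← hb] at hlow
      omega
    · obtain ⟨v, hv, hlow⟩ := ih (fib Y 2) (Finset.card_pos.mp (by omega))
      refine ⟨((2 : Fin 3), v), mem_fib.mp hv, ?_⟩
      rw [deg_decomp Y 2 v]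
      have hfib1 : ((2 : Fin 3) + 1) = (0 : Fin 3) := by decide
      rw [hfib1, ← ha]
      rw [← hc] at hlow
      omega

lemma fib_univ (j : ℕ) (p : Fin 3) : fib (Finset.univ : Finset (Tw (j+1))) p = Finset.univ := by
  ext y
  simp [mem_fib]
  exact Finset.mem_univ _

lemma card_univ_Tw (j : ℕ) : (Finset.univ : Finset (Tw j)).card = 3^j := by
  rw [Finset.card_univ, card_Tw]

/-- The tower is out-regular of degree `(3^j - 1)/2`. -/
theorem tower_reg : ∀ (j : ℕ) (v : Tw j),
    2 * outDegIn (fun u v => arcT j u v = true) Finset.univ v + 1 = 3^j := by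
  intro j
  induction j with
  | zero =>
    intro v
    have hdeg : outDegIn (fun u v => arcT 0 u v = true) Finset.univ v = 0 := by
      unfold outDegIn
      simp [arcT]
    rw [hdeg]
    rfl
  | succ j ih =>
    intro v
    have hv : v = ((v.1, v.2) : Fin 3 × Tw j) := rfl
    rw [hv, deg_decomp Finset.univ v.1 v.2, fib_univ, fib_univ, card_univ_Tw]
    have := ih v.2
    rw [pow_succ]
    omega

section Assembly

variable {j : ℕ}

/-- The final digraph: tower plus one apex vertex `none`. -/
def arcD (j : ℕ) : Option (Tw j) → Option (Tw j) → Bool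
  | some x, some y => arcT j x y
  | some _, none => true
  | none, some y => arcT j (twDefault j) y
  | none, none => false

lemma arcD_irrefl (z : Option (Tw j)) : arcD j z z = false := by
  cases z with
  | none => rfl
  | some x => exact arcT_irrefl j x

lemma option_decomp (X : Finset (Option (Tw j))) (P : Option (Tw j) → Bool) (hP : P none = true) :
    X.filter (fun w => P w = true)
      = ((X.eraseNone.filter (fun y => P (some y) = true)).image some)
        ∪ (X.filter (fun w => w = none)) := by
  ext w
  simp only [Finset.mem_union, Finset.mem_filter, Finset.mem_image, Finset.mem_eraseNone]
  cases w with
  | none =>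
    constructor
    · rintro ⟨hw, _⟩; exact Or.inr ⟨hw, rfl⟩
    · rintro (⟨y, _, hy⟩ | ⟨hw, _⟩)
      · exact absurd hy (by simp)
      · exact ⟨hw, hP⟩
  | some v =>
    constructor
    · rintro ⟨hw, hPw⟩; exact Or.inl ⟨v, ⟨⟨hw, hPw⟩, rfl⟩⟩
    · rintro (⟨y, ⟨⟨hy, hPy⟩, hy2⟩⟩ | ⟨_, h⟩)
      · have : y = v := by simpa using hy2
        subst this; exact ⟨hy, hPy⟩
      · exact absurd h (by simp)

lemma card_filter_none (X : Finset (Option (Tw j))) :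
    (X.filter (fun w => w = none)).card = if none ∈ X then 1 else 0 := by
  by_cases h : none ∈ X
  · rw [if_pos h, Finset.card_eq_one]
    refine ⟨none, ?_⟩
    ext w
    simp only [Finset.mem_filter, Finset.mem_singleton]
    constructor
    · rintro ⟨_, rfl⟩; rfl
    · rintro rfl; exact ⟨h, rfl⟩
  · simp [h, Finset.filter_eq']

lemma disj_img_none (S : Finset (Tw j)) (T : Finset (Option (Tw j))) :
    Disjoint (S.image some) (T.filter (fun w => w = none)) := by
  rw [Finset.disjoint_left]
  intro w hw1 hw2
  rw [Finset.mem_filter] at hw2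
  obtain ⟨y, _, hy⟩ := Finset.mem_image.mp hw1
  rw [hw2.2] at hy
  exact absurd hy (by simp)

lemma degD_some (X : Finset (Option (Tw j))) (v : Tw j) :
    outDegIn (fun u w => arcD j u w = true) X (some v)
      = outDegIn (fun u w => arcT j u w = true) X.eraseNone v + (if none ∈ X then 1 else 0) := by
  unfold outDegIn
  rw [option_decomp X (fun w => arcD j (some v) w) rfl,
    Finset.card_union_of_disjoint (disj_img_none _ _),
    Finset.card_image_of_injective _ (Option.some_injective _), card_filter_none]
  rfl

lemma card_option_split (X : Finset (Option (Tw j))) :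
    X.card = X.eraseNone.card + (if none ∈ X then 1 else 0) := by
  have h : X = (X.eraseNone.image some) ∪ (X.filter (fun w => w = none)) := by
    ext w
    cases w with
    | none => simp
    | some v => simp
  conv_lhs => rw [h]
  rw [Finset.card_union_of_disjoint (disj_img_none _ _),
    Finset.card_image_of_injective _ (Option.some_injective _), card_filter_none]

lemma eraseNone_univ : (Finset.univ : Finset (Option (Tw j))).eraseNone = Finset.univ := by
  ext y
  simp

lemma degD_none_univ :
    outDegIn (fun u w => arcD j u w = true) Finset.univ (none : Option (Tw j))
      = outDegIn (fun u w => arcT j u w = true) Finset.univ (twDefault j) := by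
  unfold outDegIn
  have h : (Finset.univ : Finset (Option (Tw j))).filter (fun w => arcD j none w = true)
      = ((Finset.univ : Finset (Tw j)).filter (fun y => arcT j (twDefault j) y = true)).image some := by
    ext w
    cases w with
    | none => simp only [Finset.mem_filter, Finset.mem_image]; simp [arcD]
    | some y => simp only [Finset.mem_filter, Finset.mem_image]; simp [arcD]
  rw [h, Finset.card_image_of_injective _ (Option.some_injective _)]

end Assembly

section Transfer

variable {α β : Type*} [DecidableEq α] [DecidableEq β]

lemma outDegIn_image_equiv (e : α ≃ β) (R : β → β → Prop) [DecidableRel R]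
    (X : Finset α) (v : α) :
    outDegIn (fun u w => R (e u) (e w)) X v = outDegIn R (X.image e) (e v) := by
  unfold outDegIn
  rw [← Finset.card_image_of_injective (X.filter (fun w => R (e v) (e w))) e.injective]
  congr 1
  ext b
  simp only [Finset.mem_image, Finset.mem_filter]
  constructor
  · rintro ⟨u, ⟨hu, hR⟩, rfl⟩
    exact ⟨⟨u, hu, rfl⟩, hR⟩
  · rintro ⟨⟨u, hu, rfl⟩, hR⟩
    exact ⟨u, ⟨hu, hR⟩, rfl⟩

lemma minOutDeg_image_equiv (e : α ≃ β) (R : β → β → Prop) [DecidableRel R] (X : Finset α) :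
    minOutDeg (fun u w => R (e u) (e w)) X = minOutDeg R (X.image e) := by
  unfold minOutDeg
  by_cases hX : X.Nonempty
  · have hX' : (X.image e).Nonempty := hX.image e
    rw [dif_pos hX, dif_pos hX']
    apply le_antisymm
    · apply Finset.le_inf'
      intro b hb
      obtain ⟨u, hu, rfl⟩ := Finset.mem_image.mp hb
      rw [← outDegIn_image_equiv e R X u]
      exact Finset.inf'_le _ hu
    · apply Finset.le_inf'
      intro u hu
      rw [outDegIn_image_equiv e R X u]
      exact Finset.inf'_le _ (Finset.mem_image_of_mem e hu)
  · have hX' : ¬ (X.image e).Nonempty := by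
      intro h
      obtain ⟨b, hb⟩ := h
      obtain ⟨u, hu, _⟩ := Finset.mem_image.mp hb
      exact hX ⟨u, hu⟩
    rw [dif_neg hX, dif_neg hX']

end Transfer

lemma hlf_pos {j : ℕ} (hj : 1 ≤ j) : 1 ≤ hlf j := by
  have h1 := hlf_spec j
  have h2 : (3:ℕ)^1 ≤ 3^j := Nat.pow_le_pow_right (by norm_num) hj
  simp only [pow_one] at h2
  omega

/-- Negative answer to Alon's problem: for every constant `c` there exist `n`
and a `2n`-vertex digraph of minimum out-degree `s = n - 1` in which every
`n`-vertex induced subdigraph has minimum out-degree strictly less than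
`s/2 - c`. -/
theorem no_absolute_constant (c : ℝ) :
    ∃ (n : ℕ) (A : Fin (2 * n) → Fin (2 * n) → Bool),
      (∀ v, A v v = false) ∧
      minOutDeg (fun u v => A u v = true) Finset.univ = n - 1 ∧
      ∀ X : Finset (Fin (2 * n)), X.card = n →
        (minOutDeg (fun u v => A u v = true) X : ℝ) < ((n : ℝ) - 1) / 2 - c := by
  set jc : ℕ := 2 * ⌈c⌉₊ + 3 with hjc
  have hj1 : 1 ≤ jc := by omega
  have hjR : 2 * c + 2 < (jc : ℝ) := by
    have h1 : c ≤ (⌈c⌉₊ : ℝ) := Nat.le_ceil c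
    have h2 : ((2 * ⌈c⌉₊ + 3 : ℕ) : ℝ) = 2 * ((⌈c⌉₊ : ℕ) : ℝ) + 3 := by push_cast; ring
    rw [hjc, h2]
    linarith
  refine ⟨hlf jc + 1, ?_⟩
  have h2n : 2 * (hlf jc + 1) = 3^jc + 1 := by have := hlf_spec jc; omega
  have hcard : Fintype.card (Fin (2 * (hlf jc + 1))) = Fintype.card (Option (Tw jc)) := by
    rw [Fintype.card_fin, Fintype.card_option, card_Tw, h2n]
  let e : Fin (2 * (hlf jc + 1)) ≃ Option (Tw jc) := Fintype.equivOfCardEq hcard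
  refine ⟨fun u v => arcD jc (e u) (e v), ?_, ?_, ?_⟩
  · intro v
    exact arcD_irrefl (e v)
  · -- minimum out-degree of the whole digraph
    have ht := minOutDeg_image_equiv e (fun u w => arcD jc u w = true) Finset.univ
    rw [ht, Finset.image_univ_equiv]
    have hsome : ∀ v : Tw jc,
        outDegIn (fun u w => arcD jc u w = true) Finset.univ (some v) = hlf jc + 1 := by
      intro v
      rw [degD_some, eraseNone_univ]
      have hd : outDegIn (fun u w => arcT jc u w = true) Finset.univ v = hlf jc := by
        have h1 := tower_reg jc v
        have h2 := hlf_spec jc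
        omega
      rw [hd]
      simp
    have hnone : outDegIn (fun u w => arcD jc u w = true) Finset.univ
        (none : Option (Tw jc)) = hlf jc := by
      rw [degD_none_univ]
      have h1 := tower_reg jc (twDefault jc)
      have h2 := hlf_spec jc
      omega
    have hne : (Finset.univ : Finset (Option (Tw jc))).Nonempty :=
      ⟨none, Finset.mem_univ _⟩
    unfold minOutDeg
    rw [dif_pos hne]
    apply le_antisymm
    · have := Finset.inf'_le (outDegIn (fun u w => arcD jc u w = true) Finset.univ)
        (Finset.mem_univ (none : Option (Tw jc)))
      rw [hnone] at this
      omega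
    · apply Finset.le_inf'
      intro b _
      cases b with
      | none => rw [hnone]; omega
      | some v => rw [hsome v]; omega
  · intro X hXcard
    have ht := minOutDeg_image_equiv e (fun u w => arcD jc u w = true) X
    rw [ht]
    set X' := X.image e with hX'
    have hX'card : X'.card = hlf jc + 1 := by
      rw [hX', Finset.card_image_of_injective _ e.injective, hXcard]
    have hX'ne : X'.Nonempty := by
      rw [← Finset.card_pos, hX'card]; omega
    -- uniform bound: 2 * minOutDeg + jc ≤ hlf jc + 2
    have hfin : 2 * minOutDeg (fun u w => arcD jc u w = true) X' + jc ≤ hlf jc + 2 := by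
      by_cases hn : (none : Option (Tw jc)) ∈ X'
      · -- apex inside X'
        have hTcard : X'.eraseNone.card = hlf jc := by
          have := card_option_split X'
          rw [hX'card] at this
          simp [hn] at this
          omega
        have hTne : X'.eraseNone.Nonempty := by
          rw [← Finset.card_pos, hTcard]; exact hlf_pos hj1
        obtain ⟨v, hv, hlow⟩ := tower_low jc X'.eraseNone hTne
        rw [hTcard, wt_hlf] at hlow
        have hdeg : outDegIn (fun u w => arcD jc u w = true) X' (some v)
            = outDegIn (fun u w => arcT jc u w = true) X'.eraseNone v + 1 := by
          rw [degD_some]; simp [hn]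
        have hmem : (some v) ∈ X' := Finset.mem_eraseNone.mp hv
        have hmin : minOutDeg (fun u w => arcD jc u w = true) X'
            ≤ outDegIn (fun u w => arcD jc u w = true) X' (some v) := by
          unfold minOutDeg
          rw [dif_pos hX'ne]
          exact Finset.inf'_le _ hmem
        rw [hdeg] at hmin
        omega
      · -- apex not in X'
        have hTcard : X'.eraseNone.card = hlf jc + 1 := by
          have := card_option_split X'
          rw [hX'card] at this
          simp [hn] at this
          omega
        have hTne : X'.eraseNone.Nonempty := by
          rw [← Finset.card_pos, hTcard]; omega
        obtain ⟨v, hv, hlow⟩ := tower_low jc X'.eraseNone hTne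
        rw [hTcard, wt_hlf_succ] at hlow
        have hdeg : outDegIn (fun u w => arcD jc u w = true) X' (some v)
            = outDegIn (fun u w => arcT jc u w = true) X'.eraseNone v := by
          rw [degD_some]; simp [hn]
        have hmem : (some v) ∈ X' := Finset.mem_eraseNone.mp hv
        have hmin : minOutDeg (fun u w => arcD jc u w = true) X'
            ≤ outDegIn (fun u w => arcD jc u w = true) X' (some v) := by
          unfold minOutDeg
          rw [dif_pos hX'ne]
          exact Finset.inf'_le _ hmem
        rw [hdeg] at hmin
        omega
    -- real arithmetic
    have hfinR : 2 * (minOutDeg (fun u w => arcD jc u w = true) X' : ℝ) + (jc : ℝ)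
        ≤ (hlf jc : ℝ) + 2 := by exact_mod_cast hfin
    have hnR : ((hlf jc + 1 : ℕ) : ℝ) = (hlf jc : ℝ) + 1 := by push_cast; ring
    rw [hnR]
    linarith
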